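/- For every word q, if q satisfies condition C3 (whenever q = u·R·v·R·w for a letter R, q is a factor of u·R·v·R·v·R·w), then q satisfies at least one of: (B2a) there exist natural numbers j, k and words u, v, w such that u·v·w is self-join-free and q is a factor of u^j·w·v^k; (B2b) there exist a natural number k and words u, v, w such that u·v·w is self-join-free and q is a factor of (u·v)^k·w·v; (B3) there exist a natural number k and words u, v, w such that u·v·w is self-join-free and q is a factor of u·w·(u·v)^k. Conversely, each of B2a, B2b, B3 implies C3. -/

import Mathlib

/-- k-fold concatenation of a word with itself. -/
def wpow {α : Type*} (w : List α) : ℕ → List α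
  | 0 => []
  | k + 1 => w ++ wpow w k

/-- Condition C3: whenever `q = u·R·v·R·w`, `q` is a factor of `u·R·v·R·v·R·w`. -/
def CondC3 {α : Type*} (q : List α) : Prop :=
  ∀ (u v w : List α) (R : α), q = u ++ [R] ++ v ++ [R] ++ w →
    q <:+: u ++ [R] ++ v ++ [R] ++ v ++ [R] ++ w

/-- B2a: `q` is a factor of `u^j·w·v^k` for some self-join-free `u·v·w`. -/
def CondB2a {α : Type*} (q : List α) : Prop :=
  ∃ (j k : ℕ) (u v w : List α), (u ++ v ++ w).Nodup ∧
    q <:+: wpow u j ++ w ++ wpow v k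

/-- B2b: `q` is a factor of `(u·v)^k·w·v` for some self-join-free `u·v·w`. -/
def CondB2b {α : Type*} (q : List α) : Prop :=
  ∃ (k : ℕ) (u v w : List α), (u ++ v ++ w).Nodup ∧
    q <:+: wpow (u ++ v) k ++ w ++ v

/-- B3: `q` is a factor of `u·w·(u·v)^k` for some self-join-free `u·v·w`. -/
def CondB3 {α : Type*} (q : List α) : Prop :=
  ∃ (k : ℕ) (u v w : List α), (u ++ v ++ w).Nodup ∧
    q <:+: u ++ w ++ wpow (u ++ v) k

namespace Stmt8

variable {α : Type*}

theorem wpow_length (u : List α) (k : ℕ) : (wpow u k).length = k * u.length := by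
  induction k with
  | zero => simp [wpow]
  | succ k ih => simp [wpow, ih, Nat.succ_mul, Nat.add_comm]

theorem gel {l m : List α} {i : ℕ} (h : i < l.length) : (l ++ m)[i]? = l[i]? := by
  rw [List.getElem?_append]; simp [h]

theorem ger {l m : List α} {i : ℕ} (h : l.length ≤ i) : (l ++ m)[i]? = m[i - l.length]? :=
  List.getElem?_append_right h

theorem wpow_getElem? (u : List α) (k i : ℕ) (h : i < k * u.length) :
    (wpow u k)[i]? = u[i % u.length]? := by
  induction k generalizing i with
  | zero => simp at h
  | succ k ih =>
    by_cases hi : i < u.length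
    · rw [wpow, gel hi, Nat.mod_eq_of_lt hi]
    · push_neg at hi
      have hs : (k+1) * u.length = k * u.length + u.length := Nat.succ_mul _ _
      rw [wpow, ger hi, ih _ (by omega)]
      congr 1
      conv_rhs => rw [← Nat.sub_add_cancel hi, Nat.add_mod_right]

theorem mem_wpow {a : α} {u : List α} {k : ℕ} (h : a ∈ wpow u k) : a ∈ u := by
  induction k with
  | zero => simp [wpow] at h
  | succ k ih => rcases List.mem_append.1 h with h | h; exact h; exact ih h

/-- Occurrence of `q` inside `T` at offset `s`. -/
def Occ (q T : List α) (s : ℕ) : Prop :=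
  s + q.length ≤ T.length ∧ ∀ i < q.length, q[i]? = T[s + i]?

theorem Occ.infix {q T : List α} {s : ℕ} (h : Occ q T s) : q <:+: T := by
  obtain ⟨hlen, hocc⟩ := h
  have hq : q = (T.drop s).take q.length := by
    apply List.ext_getElem?
    intro i
    rw [List.getElem?_take]
    split
    · rw [List.getElem?_drop]
      exact hocc i ‹_›
    · push_neg at *
      exact List.getElem?_eq_none ‹_›
  rw [hq]
  exact ((List.take_prefix _ _).isInfix).trans (List.drop_suffix s T).isInfix

theorem infix_occ {q T : List α} (h : q <:+: T) : ∃ s, Occ q T s := by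
  obtain ⟨x, y, hxy⟩ := h
  refine ⟨x.length, ?_, ?_⟩
  · rw [← hxy]; simp only [List.length_append]; omega
  · intro i hi
    rw [← hxy, List.append_assoc, ger (by omega), gel (by simpa using hi)]
    simp

/-- Pointwise picture of a word with two equal letters: the doubled word. -/
theorem doubled_eq {q : List α} {i j : ℕ} {R : α} (hij : i < j) (hj : j < q.length)
    (hRi : q[i]? = some R) (hRj : q[j]? = some R) :
    q.take i ++ [R] ++ (q.drop (i+1)).take (j - i - 1) ++ [R] ++ (q.drop (i+1)).take (j - i - 1)
      ++ [R] ++ q.drop (j+1) = q.take (j+1) ++ q.drop (i+1) := by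
  have hi : i < q.length := lt_trans hij hj
  have h1 : q.take i ++ [R] = q.take (i+1) := by
    rw [List.getElem?_eq_getElem hi] at hRi
    have := List.take_concat_get hi
    simpa [← (Option.some_inj.1 hRi)] using this
  have h2 : q.take (i+1) ++ (q.drop (i+1)).take (j - i - 1) = q.take j := by
    rw [← List.take_add]
    congr 1
    omega
  have h3 : q.take j ++ [R] = q.take (j+1) := by
    rw [List.getElem?_eq_getElem hj] at hRj
    have := List.take_concat_get hj
    simpa [← (Option.some_inj.1 hRj)] using this
  have h4 : (q.drop (i+1)).take (j - i - 1) ++ [R] ++ q.drop (j+1) = q.drop (i+1) := by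
    have h5 : (q.drop (i+1)).drop (j - i - 1) = q.drop j := by
      rw [List.drop_drop]; congr 1; omega
    have h6 : q.drop j = R :: q.drop (j+1) := by
      rw [List.drop_eq_getElem_cons hj]
      rw [List.getElem?_eq_getElem hj] at hRj
      rw [Option.some_inj.1 hRj]
    calc (q.drop (i+1)).take (j - i - 1) ++ [R] ++ q.drop (j+1)
        = (q.drop (i+1)).take (j - i - 1) ++ ([R] ++ q.drop (j+1)) := by
          rw [List.append_assoc]
      _ = (q.drop (i+1)).take (j - i - 1) ++ (q.drop (i+1)).drop (j - i - 1) := by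
          rw [h5, h6]; rfl
      _ = q.drop (i+1) := List.take_append_drop _ _
  calc q.take i ++ [R] ++ (q.drop (i+1)).take (j - i - 1) ++ [R]
        ++ (q.drop (i+1)).take (j - i - 1) ++ [R] ++ q.drop (j+1)
      = (q.take i ++ [R] ++ (q.drop (i+1)).take (j - i - 1) ++ [R])
        ++ ((q.drop (i+1)).take (j - i - 1) ++ [R] ++ q.drop (j+1)) := by
        simp [List.append_assoc]
    _ = q.take (j+1) ++ q.drop (i+1) := by rw [h4, h1, h2, h3]

theorem decomp_eq {q : List α} {i j : ℕ} {R : α} (hij : i < j) (hj : j < q.length)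
    (hRi : q[i]? = some R) (hRj : q[j]? = some R) :
    q = q.take i ++ [R] ++ (q.drop (i+1)).take (j - i - 1) ++ [R] ++ q.drop (j+1) := by
  have hi : i < q.length := lt_trans hij hj
  have h1 : q.take i ++ [R] = q.take (i+1) := by
    rw [List.getElem?_eq_getElem hi] at hRi
    have := List.take_concat_get hi
    simpa [← (Option.some_inj.1 hRi)] using this
  have h2 : q.take (i+1) ++ (q.drop (i+1)).take (j - i - 1) = q.take j := by
    rw [← List.take_add]; congr 1; omega
  have h3 : q.take j ++ [R] = q.take (j+1) := by
    rw [List.getElem?_eq_getElem hj] at hRj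
    have := List.take_concat_get hj
    simpa [← (Option.some_inj.1 hRj)] using this
  have h1' : q.take (i+1) = q.take i ++ [R] := h1.symm
  have h2' : q.take (i+1) ++ (q.drop (i+1)).take (j - i - 1) ++ [R] = q.take (j+1) := by
    rw [h2, h3]
  calc q = q.take (j+1) ++ q.drop (j+1) := (List.take_append_drop _ _).symm
    _ = _ := by rw [← h2', h1']

/-- getElem? of the doubled word `take (j+1) q ++ drop (i+1) q`. -/
theorem doubled_getElem_left {q : List α} {i j : ℕ} (hij : i < j) (hj : j < q.length)
    {m : ℕ} (hm : m ≤ j) : (q.take (j+1) ++ q.drop (i+1))[m]? = q[m]? := by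
  rw [gel (by rw [List.length_take]; omega), List.getElem?_take]
  simp [Nat.lt_succ_of_le hm]

theorem doubled_getElem_right {q : List α} {i j : ℕ} (hij : i < j) (hj : j < q.length)
    {m : ℕ} (hm : j < m) : (q.take (j+1) ++ q.drop (i+1))[m]? = q[m - (j - i)]? := by
  rw [ger (by rw [List.length_take]; omega), List.getElem?_drop, List.length_take]
  congr 1
  omega

theorem doubled_length {q : List α} {i j : ℕ} (hij : i < j) (hj : j < q.length) :
    (q.take (j+1) ++ q.drop (i+1)).length = q.length + (j - i) := by
  simp [List.length_take, List.length_drop]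
  omega

/-- Main consequence of C3 for a pair of equal letters. -/
theorem pall {q : List α} (hC3 : CondC3 q) {i j : ℕ} (hij : i < j) (hj : j < q.length)
    (hEq : q[i]? = q[j]?) :
    ∃ o ≤ j - i, (∀ t, t + o ≤ j → q[t]? = q[t + o]?) ∧
      (∀ t, i < t → t + (j - i - o) < q.length → q[t]? = q[t + (j - i - o)]?) := by
  have hi : i < q.length := lt_trans hij hj
  obtain ⟨R, hRj⟩ : ∃ R, q[j]? = some R := by
    rw [List.getElem?_eq_getElem hj]; exact ⟨_, rfl⟩
  have hRi : q[i]? = some R := hEq.trans hRj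
  have hinf := hC3 _ _ _ _ (decomp_eq hij hj hRi hRj)
  rw [show q.take i ++ [R] ++ (q.drop (i+1)).take (j - i - 1) ++ [R] ++
      (q.drop (i+1)).take (j - i - 1) ++ [R] ++ q.drop (j+1)
      = q.take (j+1) ++ q.drop (i+1) from doubled_eq hij hj hRi hRj] at hinf
  obtain ⟨o, hlen, hocc⟩ := infix_occ hinf
  rw [doubled_length hij hj] at hlen
  refine ⟨o, by omega, ?_, ?_⟩
  · intro t ht
    have ht' : t < q.length := by omega
    rw [hocc t ht', doubled_getElem_left hij hj (show o + t ≤ j by omega), Nat.add_comm]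
  · intro t hit ht
    have h1 := hocc (t + (j - i - o)) (by omega)
    rw [doubled_getElem_right hij hj (show j < o + (t + (j - i - o)) by omega)] at h1
    rw [h1]; congr 1; omega

/-- If the prefix up to the first marked letter agrees with its Δ-shift, `q` is a suffix of
the doubled word. -/
theorem claimA {q : List α} {i j : ℕ} (hij : i < j) (hj : j < q.length)
    (hA : ∀ t, t ≤ i → q[t]? = q[t + (j - i)]?) :
    q <:+: q.take (j+1) ++ q.drop (i+1) := by
  have : q = (q.take (j+1) ++ q.drop (i+1)).drop (j - i) := by
    apply List.ext_getElem?
    intro t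
    rw [List.getElem?_drop]
    by_cases ht : t ≤ i
    · rw [doubled_getElem_left hij hj (show j - i + t ≤ j by omega), hA t ht]
      congr 1; omega
    · by_cases ht2 : t < q.length
      · rw [doubled_getElem_right hij hj (by omega)]
        congr 1; omega
      · rw [List.getElem?_eq_none (by omega), List.getElem?_eq_none
          (by rw [doubled_length hij hj]; omega)]
  have hsuf : (q.take (j+1) ++ q.drop (i+1)).drop (j - i) <:+: q.take (j+1) ++ q.drop (i+1) :=
    (List.drop_suffix _ _).isInfix
  rwa [← this] at hsuf

/-- If the suffix after the second marked letter agrees with its Δ-shift, `q` is a prefix of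
the doubled word. -/
theorem claimB {q : List α} {i j : ℕ} (hij : i < j) (hj : j < q.length)
    (hB : ∀ t, i < t → t + (j - i) < q.length → q[t]? = q[t + (j - i)]?) :
    q <:+: q.take (j+1) ++ q.drop (i+1) := by
  have : q = (q.take (j+1) ++ q.drop (i+1)).take q.length := by
    apply List.ext_getElem?
    intro t
    rw [List.getElem?_take]
    split
    · by_cases ht : t ≤ j
      · rw [doubled_getElem_left hij hj ht]
      · rw [doubled_getElem_right hij hj (by omega), hB (t - (j-i)) (by omega) (by omega)]
        congr 1; omega
    · exact List.getElem?_eq_none (by omega)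
  have hpre : (q.take (j+1) ++ q.drop (i+1)).take q.length <:+: q.take (j+1) ++ q.drop (i+1) :=
    (List.take_prefix _ _).isInfix
  rwa [← this] at hpre

/-- Master lemma: to establish C3 for any factor of `T`, it suffices that any repeated letter
in `T` at distance Δ admits a full Δ-shift agreement on one side. -/
theorem c3_of_shift (T : List α)
    (hT : ∀ r1 r2, r1 < r2 → r2 < T.length → T[r1]? = T[r2]? →
      (∀ p, p ≤ r1 → T[p]? = T[p + (r2 - r1)]?) ∨
      (∀ p, r1 < p → p + (r2 - r1) < T.length → T[p]? = T[p + (r2 - r1)]?)) :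
    ∀ q : List α, q <:+: T → CondC3 q := by
  intro q hq u v w R hdecomp
  obtain ⟨s, hsl, hocc⟩ := infix_occ hq
  set i := u.length with hidef
  set j := u.length + 1 + v.length with hjdef
  have hn : q.length = u.length + 1 + v.length + 1 + w.length := by
    subst hdecomp; simp [List.length_append]; omega
  have hij : i < j := by omega
  have hj : j < q.length := by omega
  have hd2 : q = u ++ ([R] ++ v ++ [R] ++ w) := by rw [hdecomp]; simp [List.append_assoc]
  have hqi : q[i]? = some R := by
    rw [hd2, ger (le_refl _)]
    simp
  have hd3 : q = (u ++ [R] ++ v) ++ ([R] ++ w) := by rw [hdecomp]; simp [List.append_assoc]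
  have hlj : (u ++ [R] ++ v).length = j := by simp [hjdef]; omega
  have hqj : q[j]? = some R := by
    rw [hd3, ger (le_of_eq hlj), hlj, Nat.sub_self]
    simp
  have hu : q.take i = u := by
    rw [hd2, hidef, List.take_left]
  have hv : (q.drop (i+1)).take (j - i - 1) = v := by
    have : q.drop (i+1) = v ++ [R] ++ w := by
      rw [show q = (u ++ [R]) ++ (v ++ [R] ++ w) from by rw [hdecomp]; simp [List.append_assoc],
        show i + 1 = (u ++ [R]).length from by simp [hidef], List.drop_left]
    rw [this, show j - i - 1 = v.length from by omega,
      show v ++ [R] ++ w = v ++ ([R] ++ w) from by simp [List.append_assoc], List.take_left]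
  have hw : q.drop (j+1) = w := by
    rw [show q = (u ++ [R] ++ v ++ [R]) ++ w from by rw [hdecomp],
      show j + 1 = (u ++ [R] ++ v ++ [R]).length from by simp [hjdef]; omega, List.drop_left]
  have hgoal : q <:+: q.take (j+1) ++ q.drop (i+1) → q <:+: u ++ [R] ++ v ++ [R] ++ v ++ [R] ++ w := by
    intro h
    have heq := doubled_eq hij hj hqi hqj
    rw [hu, hv, hw] at heq
    rwa [heq]
  have hTr : T[s+i]? = T[s+j]? := by
    rw [← hocc i (by omega), ← hocc j (by omega), hqi, hqj]
  rcases hT (s+i) (s+j) (by omega) (by omega) hTr with hA | hB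
  · apply hgoal
    apply claimA hij hj
    intro t ht
    rw [hocc t (by omega), hocc (t + (j - i)) (by omega), hA (s + t) (by omega)]
    congr 1; omega
  · apply hgoal
    apply claimB hij hj
    intro t hit htl
    rw [hocc t (by omega), hocc (t + (j - i)) (by omega), hB (s + t) (by omega) (by omega)]
    congr 1; omega

theorem nodup_pieces {u v w : List α} (hnd : (u ++ v ++ w).Nodup) :
    u.Nodup ∧ v.Nodup ∧ w.Nodup ∧ u.Disjoint v ∧ u.Disjoint w ∧ v.Disjoint w := by
  rw [List.append_assoc, List.nodup_append'] at hnd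
  obtain ⟨h1, h2, h3⟩ := hnd
  rw [List.nodup_append'] at h2
  rw [List.disjoint_append_right] at h3
  exact ⟨h1, h2.1, h2.2.1, h3.1, h3.2, h2.2.2⟩

theorem mod_add_eq {r m e : ℕ} (h : r % m + e < m) : (r + e) % m = r % m + e := by
  conv_lhs => rw [← Nat.div_add_mod r m, Nat.add_assoc, Nat.mul_add_mod]
  exact Nat.mod_eq_of_lt h

theorem add_lt_mul {r m e N : ℕ} (h : r < N * m) (he : r % m + e < m) : r + e < N * m := by
  have h1 : r / m < N := Nat.div_lt_of_lt_mul (by rwa [Nat.mul_comm])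
  have h2 : m * (r / m) + r % m = r := Nat.div_add_mod r m
  have : r + e < m * (r / m + 1) := by rw [Nat.mul_add]; omega
  calc r + e < m * (r / m + 1) := this
    _ ≤ m * N := Nat.mul_le_mul_left m (by omega)
    _ = N * m := Nat.mul_comm _ _

theorem mod_congr_shift {r1 r2 p m : ℕ} (hr : r1 % m = r2 % m) (h12 : r1 ≤ r2) :
    (p + (r2 - r1)) % m = p % m := by
  rcases Nat.eq_zero_or_pos m with hm | hm
  · subst hm; simp at *; omega
  have hdvd : m ∣ r2 - r1 := (Nat.modEq_iff_dvd' h12).mp hr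
  obtain ⟨c, hc⟩ := hdvd
  rw [hc, Nat.mul_comm, Nat.add_mul_mod_self_right]

section Shift

/-- Shift condition for words of shape `u^J ++ w ++ v^K`. -/
theorem shiftB2a (u v w : List α) (hnd : (u ++ v ++ w).Nodup) (J K : ℕ) :
    ∀ r1 r2, r1 < r2 → r2 < ((wpow u J ++ w) ++ wpow v K).length →
      ((wpow u J ++ w) ++ wpow v K)[r1]? = ((wpow u J ++ w) ++ wpow v K)[r2]? →
      (∀ p, p ≤ r1 → ((wpow u J ++ w) ++ wpow v K)[p]? =
        ((wpow u J ++ w) ++ wpow v K)[p + (r2 - r1)]?) ∨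
      (∀ p, r1 < p → p + (r2 - r1) < ((wpow u J ++ w) ++ wpow v K).length →
        ((wpow u J ++ w) ++ wpow v K)[p]? = ((wpow u J ++ w) ++ wpow v K)[p + (r2 - r1)]?) := by
  obtain ⟨hu, hv, hw, duv, duw, dvw⟩ := nodup_pieces hnd
  set T := (wpow u J ++ w) ++ wpow v K with hT
  set a := J * u.length with ha
  set b := w.length with hb
  set c := K * v.length with hc
  have hlen : T.length = a + b + c := by
    simp [hT, wpow_length, List.length_append]; omega
  have hTu : ∀ p, p < a → T[p]? = u[p % u.length]? := by
    intro p hp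
    rw [hT, gel, gel]
    · exact wpow_getElem? u J p hp
    · rwa [wpow_length]
    · rw [List.length_append, wpow_length]; omega
  have hTw : ∀ p, a ≤ p → p < a + b → T[p]? = w[p - a]? := by
    intro p hp1 hp2
    rw [hT, gel (by rw [List.length_append, wpow_length]; omega),
      ger (by rwa [wpow_length]), wpow_length]
  have hTv : ∀ p, a + b ≤ p → p < a + b + c → T[p]? = v[(p - (a + b)) % v.length]? := by
    intro p hp hp2
    rw [hT, ger (by rw [List.length_append, wpow_length]; omega),
      List.length_append, wpow_length]
    rw [wpow_getElem? v K _ (by omega)]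
  intro r1 r2 h12 hr2 hEq
  rw [hlen] at hr2
  rcases lt_or_ge r1 a with h1u | h1
  · have hmu : 0 < u.length := by
      rcases Nat.eq_zero_or_pos u.length with h | h
      · exfalso; rw [ha, h, Nat.mul_zero] at h1u; omega
      · exact h
    rcases lt_or_ge r2 a with h2u | h2
    · -- both in the u-power region
      rw [hTu r1 h1u, hTu r2 h2u] at hEq
      have hmod : r1 % u.length = r2 % u.length :=
        (List.getElem?_inj (Nat.mod_lt _ hmu) hu).mp hEq
      left
      intro p hp
      rw [hTu p (by omega), hTu (p + (r2 - r1)) (by omega),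
        mod_congr_shift hmod (by omega)]
    · exfalso
      rw [hTu r1 h1u, List.getElem?_eq_getElem (Nat.mod_lt _ hmu)] at hEq
      rcases lt_or_ge r2 (a + b) with h2w | h2v
      · rw [hTw r2 h2 h2w] at hEq
        exact duw (List.getElem_mem _) (List.mem_of_getElem? hEq.symm)
      · rw [hTv r2 h2v (by omega)] at hEq
        exact duv (List.getElem_mem _) (List.mem_of_getElem? hEq.symm)
  · rcases lt_or_ge r1 (a + b) with h1w | h1v
    · exfalso
      rw [hTw r1 h1 h1w] at hEq
      rcases lt_or_ge r2 (a + b) with h2w | h2v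
      · rw [hTw r2 (by omega) h2w] at hEq
        have := (List.getElem?_inj (show r1 - a < w.length by omega) hw).mp hEq
        omega
      · rw [hTv r2 h2v (by omega),
          List.getElem?_eq_getElem (show r1 - a < w.length by omega)] at hEq
        exact dvw (List.mem_of_getElem? hEq.symm) (List.getElem_mem _)
    · -- both in the v-power region
      have hmv : 0 < v.length := by
        rcases Nat.eq_zero_or_pos v.length with h | h
        · exfalso; rw [hc, h, Nat.mul_zero] at hr2; omega
        · exact h
      rw [hTv r1 h1v (by omega), hTv r2 (by omega) (by omega)] at hEq
      have hmod : (r1 - (a+b)) % v.length = (r2 - (a+b)) % v.length :=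
        (List.getElem?_inj (Nat.mod_lt _ hmv) hv).mp hEq
      right
      intro p hp hpl
      rw [hlen] at hpl
      rw [hTv p (by omega) (by omega), hTv (p + (r2 - r1)) (by omega) (by omega)]
      have he1 : p + (r2 - r1) - (a + b)
          = (p - (a + b)) + ((r2 - (a + b)) - (r1 - (a + b))) := by omega
      rw [he1, mod_congr_shift hmod (by omega),
        show (p - (a+b)) % v.length = (p - (a+b)) % v.length from rfl]

/-- Shift condition for words of shape `(uv)^K ++ w ++ v`. -/
theorem shiftB2b (u v w : List α) (hnd : (u ++ v ++ w).Nodup) (K : ℕ) :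
    ∀ r1 r2, r1 < r2 → r2 < ((wpow (u ++ v) K ++ w) ++ v).length →
      ((wpow (u ++ v) K ++ w) ++ v)[r1]? = ((wpow (u ++ v) K ++ w) ++ v)[r2]? →
      (∀ p, p ≤ r1 → ((wpow (u ++ v) K ++ w) ++ v)[p]? =
        ((wpow (u ++ v) K ++ w) ++ v)[p + (r2 - r1)]?) ∨
      (∀ p, r1 < p → p + (r2 - r1) < ((wpow (u ++ v) K ++ w) ++ v).length →
        ((wpow (u ++ v) K ++ w) ++ v)[p]? = ((wpow (u ++ v) K ++ w) ++ v)[p + (r2 - r1)]?) := by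
  obtain ⟨hu, hv, hw, duv, duw, dvw⟩ := nodup_pieces hnd
  have hg : (u ++ v).Nodup := List.nodup_append'.mpr ⟨hu, hv, duv⟩
  set g := u ++ v with hgdef
  set T := (wpow g K ++ w) ++ v with hT
  have hgl : g.length = u.length + v.length := by rw [hgdef]; simp
  have hlen : T.length = K * g.length + w.length + v.length := by
    rw [hT]; simp only [List.length_append, wpow_length]
  have hTg : ∀ p, p < K * g.length → T[p]? = g[p % g.length]? := by
    intro p hp
    rw [hT, gel, gel]
    · exact wpow_getElem? g K p hp
    · rwa [wpow_length]
    · rw [List.length_append, wpow_length]; omega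
  have hTw : ∀ p, K * g.length ≤ p → p < K * g.length + w.length → T[p]? = w[p - K * g.length]? := by
    intro p hp1 hp2
    rw [hT, gel (by rw [List.length_append, wpow_length]; omega),
      ger (by rwa [wpow_length]), wpow_length]
  have hTv : ∀ p, K * g.length + w.length ≤ p →
      T[p]? = v[p - (K * g.length + w.length)]? := by
    intro p hp
    rw [hT, ger (by rw [List.length_append, wpow_length]; omega),
      List.length_append, wpow_length]
  have hgv : ∀ x, g[u.length + x]? = v[x]? := by
    intro x
    rw [hgdef, ger (Nat.le_add_right _ _)]
    congr 1; omega
  intro r1 r2 h12 hr2 hEq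
  rw [hlen] at hr2
  rcases lt_or_ge r1 (K * g.length) with h1g | h1
  · have hm0 : 0 < g.length := by
      rcases Nat.eq_zero_or_pos g.length with h | h
      · exfalso; rw [h, Nat.mul_zero] at h1g; omega
      · exact h
    rcases lt_or_ge r2 (K * g.length) with h2g | h2
    · rw [hTg r1 h1g, hTg r2 h2g] at hEq
      have hmod : r1 % g.length = r2 % g.length := (List.getElem?_inj (Nat.mod_lt _ hm0) hg).mp hEq
      left
      intro p hp
      rw [hTg p (by omega), hTg (p + (r2 - r1)) (by omega),
        mod_congr_shift hmod (by omega)]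
    · rcases lt_or_ge r2 (K * g.length + w.length) with h2w | h2v
      · exfalso
        rw [hTg r1 h1g, hTw r2 h2 h2w,
          List.getElem?_eq_getElem (Nat.mod_lt _ hm0)] at hEq
        have hmemw := List.mem_of_getElem? hEq.symm
        have hmemg : g[r1 % g.length]'(Nat.mod_lt _ hm0) ∈ u ++ v := by
          rw [← hgdef]; exact List.getElem_mem _
        rcases List.mem_append.1 hmemg with h | h
        · exact duw h hmemw
        · exact dvw h hmemw
      · -- r1 periodic, r2 in the trailing v
        rw [hTg r1 h1g, hTv r2 h2v] at hEq
        have halign : r1 % g.length = u.length + (r2 - (K * g.length + w.length)) := by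
          rw [← hgv] at hEq
          exact (List.getElem?_inj (Nat.mod_lt _ hm0) hg).mp hEq
        right
        intro p hp hpl
        rw [hlen] at hpl
        have hte : r2 - (K * g.length + w.length) + (p - r1) < v.length := by omega
        have hmodp : r1 % g.length + (p - r1) < g.length := by rw [halign]; omega
        have hpa : p < K * g.length := by
          have := add_lt_mul h1g hmodp
          omega
        rw [hTg p hpa, hTv (p + (r2 - r1)) (by omega)]
        have h1x : p % g.length = u.length + (r2 - (K * g.length + w.length) + (p - r1)) := by
          conv_lhs => rw [show p = r1 + (p - r1) by omega, mod_add_eq hmodp, halign]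
          omega
        rw [h1x, hgv]
        congr 1; omega
  · rcases lt_or_ge r1 (K * g.length + w.length) with h1w | h1v
    · exfalso
      rw [hTw r1 h1 h1w] at hEq
      rcases lt_or_ge r2 (K * g.length + w.length) with h2w | h2v
      · rw [hTw r2 (by omega) h2w] at hEq
        have := (List.getElem?_inj (show r1 - K * g.length < w.length by omega) hw).mp hEq
        omega
      · rw [hTv r2 h2v,
          List.getElem?_eq_getElem (show r1 - K * g.length < w.length by omega)] at hEq
        exact dvw (List.mem_of_getElem? hEq.symm) (List.getElem_mem _)
    · exfalso
      rw [hTv r1 h1v, hTv r2 (by omega)] at hEq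
      have := (List.getElem?_inj (show r1 - (K * g.length + w.length) < v.length by omega) hv).mp hEq
      omega

/-- Shift condition for words of shape `u ++ w ++ (uv)^K`. -/
theorem shiftB3 (u v w : List α) (hnd : (u ++ v ++ w).Nodup) (K : ℕ) :
    ∀ r1 r2, r1 < r2 → r2 < ((u ++ w) ++ wpow (u ++ v) K).length →
      ((u ++ w) ++ wpow (u ++ v) K)[r1]? = ((u ++ w) ++ wpow (u ++ v) K)[r2]? →
      (∀ p, p ≤ r1 → ((u ++ w) ++ wpow (u ++ v) K)[p]? =
        ((u ++ w) ++ wpow (u ++ v) K)[p + (r2 - r1)]?) ∨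
      (∀ p, r1 < p → p + (r2 - r1) < ((u ++ w) ++ wpow (u ++ v) K).length →
        ((u ++ w) ++ wpow (u ++ v) K)[p]? = ((u ++ w) ++ wpow (u ++ v) K)[p + (r2 - r1)]?) := by
  obtain ⟨hu, hv, hw, duv, duw, dvw⟩ := nodup_pieces hnd
  have hg : (u ++ v).Nodup := List.nodup_append'.mpr ⟨hu, hv, duv⟩
  set g := u ++ v with hgdef
  set T := (u ++ w) ++ wpow g K with hT
  have hgl : g.length = u.length + v.length := by rw [hgdef]; simp
  have hlen : T.length = u.length + w.length + K * g.length := by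
    simp [hT, wpow_length, List.length_append]; omega
  have hTu : ∀ p, p < u.length → T[p]? = u[p]? := by
    intro p hp
    rw [hT, gel (by rw [List.length_append]; omega), gel hp]
  have hTw : ∀ p, u.length ≤ p → p < u.length + w.length → T[p]? = w[p - u.length]? := by
    intro p hp1 hp2
    rw [hT, gel (by rw [List.length_append]; omega), ger hp1]
  have hTg : ∀ p, u.length + w.length ≤ p → p < u.length + w.length + K * g.length →
      T[p]? = g[(p - (u.length + w.length)) % g.length]? := by
    intro p hp hp2
    rw [hT, ger (by rw [List.length_append]; omega), List.length_append]
    rw [wpow_getElem? g K _ (by omega)]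
  have hgu : ∀ x, x < u.length → g[x]? = u[x]? := by
    intro x hx
    rw [hgdef, gel hx]
  intro r1 r2 h12 hr2 hEq
  rw [hlen] at hr2
  rcases lt_or_ge r1 u.length with h1u | h1
  · rcases lt_or_ge r2 u.length with h2u | h2
    · exfalso
      rw [hTu r1 h1u, hTu r2 h2u] at hEq
      have := (List.getElem?_inj h1u hu).mp hEq
      omega
    · rcases lt_or_ge r2 (u.length + w.length) with h2w | h2g
      · exfalso
        rw [hTu r1 h1u, hTw r2 h2 h2w,
          List.getElem?_eq_getElem (show r1 < u.length from h1u)] at hEq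
        exact duw (List.getElem_mem _) (List.mem_of_getElem? hEq.symm)
      · -- r1 in leading u, r2 in periodic region
        have hm0 : 0 < g.length := by omega
        rw [hTu r1 h1u, hTg r2 h2g (by omega)] at hEq
        have halign : (r2 - (u.length + w.length)) % g.length = r1 := by
          rw [← hgu r1 h1u] at hEq
          exact (List.getElem?_inj (Nat.mod_lt _ hm0) hg).mp hEq.symm
        left
        intro p hp
        have hx2e : r2 - (u.length + w.length) ≥ r1 - p := by
          have := Nat.mod_le (r2 - (u.length + w.length)) g.length
          omega
        have hdm : g.length * ((r2 - (u.length + w.length)) / g.length) + r1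
            = r2 - (u.length + w.length) := by
          conv_rhs => rw [← Nat.div_add_mod (r2 - (u.length + w.length)) g.length, halign]
        have harith : p + (r2 - r1) = u.length + w.length +
            (g.length * ((r2 - (u.length + w.length)) / g.length) + (r1 - (r1 - p))) := by
          omega
        rw [hTu p (by omega), harith, hTg _ (by omega) (by omega)]
        have h2x : u.length + w.length +
            (g.length * ((r2 - (u.length + w.length)) / g.length) + (r1 - (r1 - p)))
            - (u.length + w.length)
            = g.length * ((r2 - (u.length + w.length)) / g.length) + (r1 - (r1 - p)) := by
          omega
        rw [h2x, Nat.mul_add_mod, Nat.mod_eq_of_lt (show r1 - (r1 - p) < g.length by omega),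
          hgu _ (by omega)]
        congr 1; omega
  · rcases lt_or_ge r1 (u.length + w.length) with h1w | h1g
    · exfalso
      rw [hTw r1 h1 h1w] at hEq
      rcases lt_or_ge r2 (u.length + w.length) with h2w | h2g
      · rw [hTw r2 (by omega) h2w] at hEq
        have := (List.getElem?_inj (show r1 - u.length < w.length by omega) hw).mp hEq
        omega
      · have hm0 : 0 < g.length := by
          rcases Nat.eq_zero_or_pos g.length with h | h
          · exfalso; rw [h, Nat.mul_zero] at hr2; omega
          · exact h
        rw [hTg r2 h2g (by omega),
          List.getElem?_eq_getElem (show r1 - u.length < w.length by omega)] at hEq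
        have hmemw : w[r1 - u.length]'(by omega) ∈ w := List.getElem_mem _
        have hmemg : w[r1 - u.length]'(by omega) ∈ u ++ v := by
          rw [← hgdef]; exact List.mem_of_getElem? hEq.symm
        rcases List.mem_append.1 hmemg with h | h
        · exact duw h hmemw
        · exact dvw h hmemw
    · -- both in periodic region
      have hm0 : 0 < g.length := by
        rcases Nat.eq_zero_or_pos g.length with h | h
        · exfalso; rw [h, Nat.mul_zero] at hr2; omega
        · exact h
      rw [hTg r1 h1g (by omega), hTg r2 (by omega) (by omega)] at hEq
      have hmod : (r1 - (u.length + w.length)) % g.length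
          = (r2 - (u.length + w.length)) % g.length :=
        (List.getElem?_inj (Nat.mod_lt _ hm0) hg).mp hEq
      right
      intro p hp hpl
      rw [hlen] at hpl
      rw [hTg p (by omega) (by omega), hTg (p + (r2 - r1)) (by omega) (by omega)]
      have he1 : p + (r2 - r1) - (u.length + w.length)
          = (p - (u.length + w.length))
            + ((r2 - (u.length + w.length)) - (r1 - (u.length + w.length))) := by omega
      rw [he1, mod_congr_shift hmod (by omega)]

end Shift

section Forward

/-- Iterated periodicity: from single-step period `p` on `[a, b)` get reduction to the seed. -/
theorem per_iter {q : List α} {a p b : ℕ} (hp : 0 < p)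
    (hbase : ∀ s, a ≤ s → s + p < b → q[s]? = q[s + p]?) :
    ∀ t, a ≤ t → t < b → q[t]? = q[a + (t - a) % p]? := by
  intro t
  induction t using Nat.strong_induction_on with
  | _ t ih =>
    intro hat htb
    by_cases h : t - a < p
    · rw [Nat.mod_eq_of_lt h]
      congr 1
      omega
    · have h1 : q[t - p]? = q[t]? := by
        have := hbase (t - p) (by omega) (by omega)
        rwa [Nat.sub_add_cancel (by omega)] at this
      rw [← h1, ih (t - p) (by omega) (by omega) (by omega)]
      congr 1
      conv_rhs => rw [show t - a = (t - p - a) + p by omega, Nat.add_mod_right]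

/-- The segment `q[a..b)`. -/
def seg (q : List α) (a b : ℕ) : List α := (q.drop a).take (b - a)

theorem seg_length {q : List α} {a b : ℕ} (hab : a ≤ b) (hb : b ≤ q.length) :
    (seg q a b).length = b - a := by
  simp [seg]
  omega

theorem seg_getElem? {q : List α} {a b x : ℕ} (hx : x < b - a) :
    (seg q a b)[x]? = q[a + x]? := by
  rw [seg, List.getElem?_take]
  simp [hx, List.getElem?_drop]

theorem seg_append {q : List α} {a b c : ℕ} (hab : a ≤ b) (hbc : b ≤ c) (hc : c ≤ q.length) :
    seg q a b ++ seg q b c = seg q a c := by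
  apply List.ext_getElem?
  intro x
  by_cases h1 : x < b - a
  · rw [gel (by rw [seg_length hab (by omega)]; omega), seg_getElem? h1,
      seg_getElem? (by omega)]
  · by_cases h2 : x < c - a
    · rw [ger (by rw [seg_length hab (by omega)]; omega), seg_length hab (by omega),
        seg_getElem? (by omega), seg_getElem? h2]
      congr 1
      omega
    · rw [List.getElem?_eq_none, List.getElem?_eq_none]
      · rw [seg_length (by omega) hc]; omega
      · rw [List.length_append, seg_length hab (by omega), seg_length hbc hc]; omega

theorem seg_nodup {q : List α} {a b : ℕ}
    (h : ∀ x y, a ≤ x → x < y → y < b → q[x]? ≠ q[y]?) : (seg q a b).Nodup := by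
  rw [List.nodup_iff_getElem?_ne_getElem?]
  intro i j hij hj hEq
  rw [seg, List.length_take, List.length_drop] at hj
  have hj2 : j < b - a := by omega
  rw [seg_getElem? (by omega), seg_getElem? hj2] at hEq
  exact h (a + i) (a + j) (by omega) (by omega) (by omega) hEq

theorem mem_seg {q : List α} {a b : ℕ} {R : α} (hb : b ≤ q.length) (h : R ∈ seg q a b) :
    ∃ x, a ≤ x ∧ x < b ∧ q[x]? = some R := by
  rw [List.mem_iff_getElem?] at h
  obtain ⟨i, hi⟩ := h
  have hilen : i < (seg q a b).length := by
    by_contra hc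
    rw [List.getElem?_eq_none (by omega)] at hi
    simp at hi
  rw [seg, List.length_take, List.length_drop] at hilen
  have : i < b - a := by omega
  rw [seg_getElem? this] at hi
  exact ⟨a + i, by omega, by omega, hi⟩

theorem get3_1 {A B C : List α} {i : ℕ} (h : i < A.length) : ((A ++ B) ++ C)[i]? = A[i]? := by
  rw [gel (by rw [List.length_append]; omega), gel h]

theorem get3_2 {A B C : List α} {i : ℕ} (h1 : A.length ≤ i) (h2 : i < A.length + B.length) :
    ((A ++ B) ++ C)[i]? = B[i - A.length]? := by
  rw [gel (by rw [List.length_append]; omega), ger h1]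

theorem get3_3 {A B C : List α} {i : ℕ} (h : A.length + B.length ≤ i) :
    ((A ++ B) ++ C)[i]? = C[i - (A.length + B.length)]? := by
  rw [ger (by rw [List.length_append]; omega), List.length_append]

theorem nodup_three {u v w : List α} (hu : u.Nodup) (hv : v.Nodup) (hw : w.Nodup)
    (duv : u.Disjoint v) (duw : u.Disjoint w) (dvw : v.Disjoint w) : (u ++ v ++ w).Nodup := by
  rw [List.append_assoc, List.nodup_append']
  exact ⟨hu, List.nodup_append'.mpr ⟨hv, hw, dvw⟩,
    by rw [List.disjoint_append_right]; exact ⟨duv, duw⟩⟩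

/-- Builder: a word with an eventually periodic tail (and distinct letters before the first
full period) satisfies B2a. -/
theorem build_tail {q : List α} {a p : ℕ} (hp : 0 < p) (hap : a + p ≤ q.length)
    (hsuf : ∀ s, a ≤ s → s + p < q.length → q[s]? = q[s + p]?)
    (hdist : ∀ x y, x < y → y < a + p → q[x]? ≠ q[y]?) : CondB2a q := by
  set n := q.length with hn
  refine ⟨0, n, [], seg q a (a + p), seg q 0 a, ?_, ?_⟩
  · -- nodup
    refine nodup_three (by simp) (seg_nodup ?_) (seg_nodup ?_) (by simp) (by simp) ?_
    · intro x y hax hxy hy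
      exact hdist x y hxy hy
    · intro x y _ hxy hy
      exact hdist x y hxy (by omega)
    · intro R hRv hRw
      obtain ⟨x, hax, hx, hqx⟩ := mem_seg (by omega) hRv
      obtain ⟨y, _, hy, hqy⟩ := mem_seg (by omega) hRw
      exact hdist y x (by omega) (by omega) (hqy.trans hqx.symm)
  · -- infix
    have hW : wpow ([] : List α) 0 ++ seg q 0 a ++ wpow (seg q a (a + p)) n
        = seg q 0 a ++ wpow (seg q a (a + p)) n := by
      rw [show wpow ([] : List α) 0 = [] from rfl, List.nil_append]
    rw [hW]
    have hvl : (seg q a (a + p)).length = p := by rw [seg_length (by omega) hap]; omega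
    have hwl : (seg q 0 a).length = a := by rw [seg_length (by omega) (by omega)]; omega
    have hnp : n ≤ n * p := Nat.le_mul_of_pos_right n hp
    apply Occ.infix (s := 0)
    constructor
    · rw [List.length_append, wpow_length, hvl, hwl]
      omega
    · intro t ht
      rw [Nat.zero_add]
      by_cases hta : t < a
      · rw [gel (by rw [hwl]; omega), seg_getElem? (by omega)]
        simp
      · rw [ger (by rw [hwl]; omega), hwl,
          wpow_getElem? _ _ _ (by rw [hvl]; omega), hvl,
          seg_getElem? (by have := Nat.mod_lt (t - a) hp; omega)]
        have := per_iter hp hsuf t (by omega) ht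
        rw [this]

/-- Builder: a word with a periodic prefix, a middle block and an eventually periodic tail
satisfies B2a. -/
theorem build_two {q : List α} {d μ m D : ℕ} (hd : 0 < d) (hdμ : d ≤ μ) (hD : 0 < D)
    (hμm : μ ≤ m) (hmDn : m + D ≤ q.length)
    (hper : ∀ t, t + d < μ → q[t]? = q[t + d]?)
    (htail : ∀ s, m ≤ s → s + D < q.length → q[s]? = q[s + D]?)
    (hwind : ∀ x y, μ - d ≤ x → x < y → y < μ → q[x]? ≠ q[y]?)
    (hfreshm : ∀ x y, x < y → μ ≤ y → y < m + D → q[x]? ≠ q[y]?) : CondB2a q := by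
  set n := q.length with hn
  have hμn : μ ≤ n := by omega
  have hμnd : μ ≤ n * d := le_trans hμn (Nat.le_mul_of_pos_right n hd)
  have hnD : n ≤ n * D := Nat.le_mul_of_pos_right n hD
  have hmod0 : ∀ t, t < μ → q[t]? = q[t % d]? := by
    intro t htμ
    have := per_iter (a := 0) (b := μ) hd (fun s _ hs => hper s hs) t (by omega) htμ
    simpa using this
  refine ⟨n, n, seg q (μ - d) μ, seg q m (m + D), seg q μ m, ?_, ?_⟩
  · refine nodup_three (seg_nodup ?_) (seg_nodup ?_) (seg_nodup ?_) ?_ ?_ ?_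
    · intro x y h1 h2 h3; exact hwind x y h1 h2 h3
    · intro x y _ hxy hy; exact hfreshm x y hxy (by omega) (by omega)
    · intro x y hμx hxy hy; exact hfreshm x y hxy (by omega) (by omega)
    · intro R hRu hRv
      obtain ⟨x, _, hx, hqx⟩ := mem_seg (by omega) hRu
      obtain ⟨y, hmy, hy, hqy⟩ := mem_seg (by omega) hRv
      exact hfreshm x y (by omega) (by omega) (by omega) (hqx.trans hqy.symm)
    · intro R hRu hRw
      obtain ⟨x, _, hx, hqx⟩ := mem_seg (by omega) hRu
      obtain ⟨y, hmy, hy, hqy⟩ := mem_seg (by omega) hRw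
      exact hfreshm x y (by omega) (by omega) (by omega) (hqx.trans hqy.symm)
    · intro R hRv hRw
      obtain ⟨x, hmx, hx, hqx⟩ := mem_seg (by omega) hRv
      obtain ⟨y, hμy, hy, hqy⟩ := mem_seg (by omega) hRw
      exact hfreshm y x (by omega) (by omega) (by omega) (hqy.trans hqx.symm)
  · have hul : (seg q (μ - d) μ).length = d := by rw [seg_length (by omega) (by omega)]; omega
    have hvl : (seg q m (m + D)).length = D := by rw [seg_length (by omega) (by omega)]; omega
    have hwl : (seg q μ m).length = m - μ := by rw [seg_length (by omega) (by omega)]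
    apply Occ.infix (s := n * d - μ)
    constructor
    · simp only [List.length_append, wpow_length, hul, hvl, hwl]
      omega
    · intro t ht
      by_cases htμ : t < μ
      · rw [get3_1 (by rw [wpow_length, hul]; omega)]
        rw [wpow_getElem? _ _ _ (by rw [hul]; omega), hul,
          seg_getElem? (by have := Nat.mod_lt (n * d - μ + t) hd; omega)]
        set r := (n * d - μ + t) % d with hr
        have hrd : r < d := Nat.mod_lt _ hd
        have hx : μ - d + r < μ := by omega
        have hresx : (μ - d + r) % d = t % d := by
          have h1 : (μ - d + r) % d = (μ - d + r + d) % d := (Nat.add_mod_right _ d).symm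
          have h2 : μ - d + r + d = μ + r := by omega
          have h3 : (μ + r) % d = (μ + (n * d - μ + t)) % d := by
            rw [hr, Nat.add_mod_mod]
          have h4 : μ + (n * d - μ + t) = d * n + t := by
            rw [Nat.mul_comm d n]; omega
          rw [h1, h2, h3, h4, Nat.mul_add_mod]
        rw [hmod0 t htμ, hmod0 (μ - d + r) hx, hresx]
      · by_cases htm : t < m
        · rw [get3_2 (by rw [wpow_length, hul]; omega)
            (by rw [wpow_length, hul, hwl]; omega)]
          rw [wpow_length, hul, seg_getElem? (by omega)]
          congr 1
          omega
        · rw [get3_3 (by rw [wpow_length, hul, hwl]; omega)]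
          rw [wpow_length, hul, hwl]
          rw [wpow_getElem? _ _ _ (by rw [hvl]; omega), hvl,
            seg_getElem? (by have := Nat.mod_lt (n * d - μ + t - (n * d + (m - μ))) hD; omega)]
          have harg : n * d - μ + t - (n * d + (m - μ)) = t - m := by omega
          rw [harg, per_iter hD htail t (by omega) ht]

/-- Reading inside the power of the window block reproduces the periodic prefix. -/
theorem per_block {q : List α} {d μ N t : ℕ} (hd : 0 < d) (hdμ : d ≤ μ) (hμnd : μ ≤ N * d)
    (hμq : μ ≤ q.length) (htμ : t < μ) (hmod0 : ∀ s, s < μ → q[s]? = q[s % d]?) :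
    (wpow (seg q (μ - d) μ) N)[N * d - μ + t]? = q[t]? := by
  have hul : (seg q (μ - d) μ).length = d := by rw [seg_length (by omega) (by omega)]; omega
  rw [wpow_getElem? _ _ _ (by rw [hul]; omega), hul,
    seg_getElem? (by have := Nat.mod_lt (N * d - μ + t) hd; omega)]
  set r := (N * d - μ + t) % d with hr
  have hrd : r < d := Nat.mod_lt _ hd
  have hx : μ - d + r < μ := by omega
  have hresx : (μ - d + r) % d = t % d := by
    have h1 : (μ - d + r) % d = (μ - d + r + d) % d := (Nat.add_mod_right _ d).symm
    have h2 : μ - d + r + d = μ + r := by omega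
    have h3 : (μ + r) % d = (μ + (N * d - μ + t)) % d := by
      rw [hr, Nat.add_mod_mod]
    have h4 : μ + (N * d - μ + t) = d * N + t := by
      rw [Nat.mul_comm d N]; omega
    rw [h1, h2, h3, h4, Nat.mul_add_mod]
  rw [hmod0 t htμ, hmod0 (μ - d + r) hx, hresx]

/-- Builder for B2b: periodic prefix, fresh middle, and a short tail copying the window. -/
theorem build_b2b {q : List α} {d μ b0 c0 : ℕ} (hd : 0 < d) (hdμ : d < μ)
    (hb0 : μ - d ≤ b0) (hb0μ : b0 < μ) (hμc0 : μ ≤ c0) (hc0n : c0 < q.length)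
    (hshort : q.length ≤ c0 + (μ - b0))
    (hmod0 : ∀ s, s < μ → q[s]? = q[s % d]?)
    (hlemA : ∀ s, b0 ≤ s → s + (c0 - b0) < q.length → q[s]? = q[s + (c0 - b0)]?)
    (hwind : ∀ x y, μ - d ≤ x → x < y → y < μ → q[x]? ≠ q[y]?)
    (hfresh : ∀ x y, x < y → μ ≤ y → y < c0 → q[x]? ≠ q[y]?) : CondB2b q := by
  set n := q.length with hn
  have hμn : μ ≤ n := by omega
  have hμnd : μ ≤ n * d := le_trans hμn (Nat.le_mul_of_pos_right n hd)
  refine ⟨n, seg q (μ - d) b0, seg q b0 μ, seg q μ c0, ?_, ?_⟩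
  · refine nodup_three (seg_nodup ?_) (seg_nodup ?_) (seg_nodup ?_) ?_ ?_ ?_
    · intro x y h1 h2 h3; exact hwind x y h1 h2 (by omega)
    · intro x y h1 h2 h3; exact hwind x y (by omega) h2 h3
    · intro x y h1 h2 h3; exact hfresh x y h2 (by omega) h3
    · intro R hR1 hR2
      obtain ⟨x, hx1, hx2, hqx⟩ := mem_seg (by omega) hR1
      obtain ⟨y, hy1, hy2, hqy⟩ := mem_seg (by omega) hR2
      exact hwind x y (by omega) (by omega) (by omega) (hqx.trans hqy.symm)
    · intro R hR1 hR2
      obtain ⟨x, hx1, hx2, hqx⟩ := mem_seg (by omega) hR1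
      obtain ⟨y, hy1, hy2, hqy⟩ := mem_seg (by omega) hR2
      exact hfresh x y (by omega) (by omega) (by omega) (hqx.trans hqy.symm)
    · intro R hR1 hR2
      obtain ⟨x, hx1, hx2, hqx⟩ := mem_seg (by omega) hR1
      obtain ⟨y, hy1, hy2, hqy⟩ := mem_seg (by omega) hR2
      exact hfresh x y (by omega) (by omega) (by omega) (hqx.trans hqy.symm)
  · have hseg : seg q (μ - d) b0 ++ seg q b0 μ = seg q (μ - d) μ :=
      seg_append (by omega) (by omega) (by omega)
    rw [hseg]
    have hul : (seg q (μ - d) μ).length = d := by rw [seg_length (by omega) (by omega)]; omega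
    have hvl : (seg q b0 μ).length = μ - b0 := by rw [seg_length (by omega) (by omega)]
    have hwl : (seg q μ c0).length = c0 - μ := by rw [seg_length (by omega) (by omega)]
    apply Occ.infix (s := n * d - μ)
    constructor
    · rw [List.length_append, List.length_append, wpow_length, hul, hvl, hwl]
      omega
    · intro t ht
      by_cases htμ : t < μ
      · rw [get3_1 (by rw [wpow_length, hul]; omega)]
        exact (per_block hd (by omega) hμnd hμn htμ hmod0).symm
      · by_cases htc : t < c0
        · rw [get3_2 (by rw [wpow_length, hul]; omega) (by rw [wpow_length, hul, hwl]; omega)]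
          rw [wpow_length, hul, seg_getElem? (by omega)]
          congr 1
          omega
        · rw [get3_3 (by rw [wpow_length, hul, hwl]; omega)]
          rw [wpow_length, hul, hwl, seg_getElem? (by omega)]
          have := hlemA (b0 + (t - c0)) (by omega) (by omega)
          rw [show b0 + (t - c0) + (c0 - b0) = t by omega] at this
          rw [← this]
          congr 1
          omega

/-- Builder for B3: a short head copying the window, fresh middle, and a periodic tail. -/
theorem build_b3 {q : List α} {d μ b0 c0 : ℕ} (hd : 0 < d) (hdμ : d < μ)
    (hb0 : μ - d ≤ b0) (hb0μ : b0 < μ) (hb0d : b0 ≤ d) (hμc0 : μ ≤ c0) (hc0n : c0 < q.length)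
    (hper : ∀ t, t + d < μ → q[t]? = q[t + d]?)
    (hlemA : ∀ s, b0 ≤ s → s + (c0 - b0) < q.length → q[s]? = q[s + (c0 - b0)]?)
    (hwind : ∀ x y, μ - d ≤ x → x < y → y < μ → q[x]? ≠ q[y]?)
    (hfresh : ∀ x y, x < y → μ ≤ y → y < c0 → q[x]? ≠ q[y]?) : CondB3 q := by
  set n := q.length with hn
  have hμn : μ ≤ n := by omega
  have hD : 0 < c0 - b0 := by omega
  have hnD : n ≤ n * (c0 - b0) := Nat.le_mul_of_pos_right n hD
  refine ⟨n, seg q b0 μ, seg q μ c0, seg q (μ - d) b0, ?_, ?_⟩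
  · refine nodup_three (seg_nodup ?_) (seg_nodup ?_) (seg_nodup ?_) ?_ ?_ ?_
    · intro x y h1 h2 h3; exact hwind x y (by omega) h2 h3
    · intro x y h1 h2 h3; exact hfresh x y h2 (by omega) h3
    · intro x y h1 h2 h3; exact hwind x y h1 h2 (by omega)
    · intro R hR1 hR2
      obtain ⟨x, hx1, hx2, hqx⟩ := mem_seg (by omega) hR1
      obtain ⟨y, hy1, hy2, hqy⟩ := mem_seg (by omega) hR2
      exact hfresh x y (by omega) (by omega) (by omega) (hqx.trans hqy.symm)
    · intro R hR1 hR2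
      obtain ⟨x, hx1, hx2, hqx⟩ := mem_seg (by omega) hR1
      obtain ⟨y, hy1, hy2, hqy⟩ := mem_seg (by omega) hR2
      exact hwind y x (by omega) (by omega) (by omega) (hqy.trans hqx.symm)
    · intro R hR1 hR2
      obtain ⟨x, hx1, hx2, hqx⟩ := mem_seg (by omega) hR1
      obtain ⟨y, hy1, hy2, hqy⟩ := mem_seg (by omega) hR2
      exact hfresh y x (by omega) (by omega) (by omega) (hqy.trans hqx.symm)
  · have hseg : seg q b0 μ ++ seg q μ c0 = seg q b0 c0 :=
      seg_append (by omega) (by omega) (by omega)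
    rw [hseg]
    have hul : (seg q b0 μ).length = μ - b0 := by rw [seg_length (by omega) (by omega)]
    have hvl : (seg q b0 c0).length = c0 - b0 := by rw [seg_length (by omega) (by omega)]
    have hwl : (seg q (μ - d) b0).length = b0 - (μ - d) := by
      rw [seg_length (by omega) (by omega)]
    apply Occ.infix (s := d - b0)
    constructor
    · rw [List.length_append, List.length_append, wpow_length, hul, hvl, hwl]
      omega
    · intro t ht
      by_cases ht1 : t < μ - d
      · rw [get3_1 (by rw [hul]; omega), seg_getElem? (by omega)]
        have := hper t (by omega)
        rw [this]
        congr 1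
        omega
      · by_cases ht2 : t < b0
        · rw [get3_2 (by rw [hul]; omega) (by rw [hul, hwl]; omega)]
          rw [hul, seg_getElem? (by omega)]
          congr 1
          omega
        · rw [get3_3 (by rw [hul, hwl]; omega)]
          rw [hul, hwl,
            wpow_getElem? _ _ _ (by rw [hvl]; omega), hvl,
            seg_getElem? (by have := Nat.mod_lt (d - b0 + t - (μ - b0 + (b0 - (μ - d)))) hD; omega)]
          have harg : d - b0 + t - (μ - b0 + (b0 - (μ - d))) = t - b0 := by omega
          rw [harg, per_iter hD hlemA t (by omega) ht]

theorem exists_least {P : ℕ → Prop} (h : ∃ x, P x) : ∃ x, P x ∧ ∀ y, y < x → ¬ P y := by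
  classical
  exact ⟨Nat.find h, Nat.find_spec h, fun y hy => Nat.find_min h hy⟩

theorem exists_greatest {P : ℕ → Prop} {N : ℕ} (h : ∃ x, x ≤ N ∧ P x) :
    ∃ x, x ≤ N ∧ P x ∧ ∀ y, x < y → y ≤ N → ¬ P y := by
  classical
  obtain ⟨x, hxN, hPx⟩ := h
  exact ⟨Nat.findGreatest P N, Nat.findGreatest_le _, Nat.findGreatest_spec hxN hPx,
    fun y hy hyN => Nat.findGreatest_is_greatest hy hyN⟩

/-- Forward direction: C3 implies one of the B conditions. -/
theorem c3_forward {q : List α} (hC3 : CondC3 q) : CondB2a q ∨ CondB2b q ∨ CondB3 q := by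
  classical
  set n := q.length with hn
  by_cases hex : ∃ j, j < n ∧ ∃ i, i < j ∧ q[i]? = q[j]?
  · obtain ⟨j1, ⟨hj1n, i1, hi1j1, hEq1⟩, hfr⟩ := exists_least hex
    have hpres : ∀ x y, x < y → y < j1 → q[x]? ≠ q[y]? := by
      intro x y hxy hy hEq'
      exact hfr y hy ⟨by omega, x, hxy, hEq'⟩
    obtain ⟨o, ho, f1, f2⟩ := pall hC3 hi1j1 hj1n hEq1
    have hoz : o = 0 ∨ i1 = 0 := by
      rcases Nat.eq_zero_or_pos o with h | h
      · exact Or.inl h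
      · have h0 : q[0]? = q[0 + o]? := f1 0 (by omega)
        rw [Nat.zero_add] at h0
        have : ¬ o < j1 := fun hlt => hfr o hlt ⟨by omega, 0, h, h0⟩
        right; omega
    rcases hoz with rfl | hi10
    · -- suffix periodic from i1
      left
      apply build_tail (a := i1) (p := j1 - i1) (by omega) (by omega)
      · intro s hs hsp
        rcases eq_or_lt_of_le hs with rfl | h
        · rw [show i1 + (j1 - i1) = j1 by omega]
          exact hEq1
        · have := f2 s h (by omega)
          rwa [Nat.sub_zero] at this
      · intro x y hxy hy
        exact hpres x y hxy (by omega)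
    · subst hi10
      have hj1pos : 0 < j1 := hi1j1
      by_cases hV : ∃ m, m + j1 < n ∧ q[m]? ≠ q[m + j1]?
      · obtain ⟨μ0, ⟨hμ0n, hviol⟩, hμmin⟩ := exists_least hV
        have hμper : ∀ t, t < μ0 → t + j1 < n → q[t]? = q[t + j1]? := by
          intro t ht htn
          have := hμmin t ht
          push_neg at this
          exact this htn
        have hμ0pos : 0 < μ0 := by
          by_contra hc
          push_neg at hc
          apply hviol
          have h00 : μ0 = 0 := by omega
          rw [h00, Nat.zero_add]
          exact hEq1
        have hper : ∀ t, t + j1 < μ0 + j1 → q[t]? = q[t + j1]? :=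
          fun t ht => hμper t (by omega) (by omega)
        have hmod0 : ∀ t, t < μ0 + j1 → q[t]? = q[t % j1]? := by
          intro t ht
          have := per_iter (a := 0) (b := μ0 + j1) hj1pos (fun s _ hs => hper s hs) t
            (by omega) ht
          simpa using this
        have hwind : ∀ x y, μ0 ≤ x → x < y → y < μ0 + j1 → q[x]? ≠ q[y]? := by
          intro x y h1 h2 h3 hEq'
          have hres : x % j1 ≠ y % j1 := by
            intro hre
            have hdvd : j1 ∣ y - x := (Nat.modEq_iff_dvd' (by omega)).mp hre
            obtain ⟨k, hk⟩ := hdvd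
            rcases Nat.eq_zero_or_pos k with rfl | hkpos
            · omega
            · have h5 : j1 * 1 ≤ j1 * k := Nat.mul_le_mul_left j1 hkpos
              omega
          rw [hmod0 x (by omega), hmod0 y (by omega)] at hEq'
          rcases Nat.lt_or_ge (x % j1) (y % j1) with hc | hc
          · exact hpres _ _ hc (Nat.mod_lt _ hj1pos) hEq'
          · exact hpres _ _ (by omega) (Nat.mod_lt _ hj1pos) hEq'.symm
        by_cases hPc : ∃ c, ((μ0 + j1 ≤ c ∧ c < n) ∧ ∃ b, b < c ∧ q[b]? = q[c]?)
        · obtain ⟨c0, ⟨⟨hμc0, hc0n⟩, b, hbc0, hEqb⟩, hcmin⟩ := exists_least hPc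
          have hfresh : ∀ x y, x < y → μ0 + j1 ≤ y → y < c0 → q[x]? ≠ q[y]? := by
            intro x y h1 h2 h3 hEq'
            exact hcmin y h3 ⟨⟨h2, by omega⟩, x, h1, hEq'⟩
          obtain ⟨b0, hb0le, hb0spec, hb0max'⟩ :=
            exists_greatest (P := fun b' => q[b']? = q[c0]?) (N := c0 - 1) ⟨b, by omega, hEqb⟩
          have hb0lt : b0 < c0 := by omega
          have hb0max : ∀ b', b0 < b' → b' < c0 → q[b']? ≠ q[c0]? := by
            intro b' h1 h2
            exact hb0max' b' h1 (by omega)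
          have hb0lb : μ0 ≤ b0 := by
            by_contra hcon
            push_neg at hcon
            have hb' : q[b0]? = q[b0 + j1]? := hμper b0 hcon (by omega)
            exact hb0max (b0 + j1) (by omega) (by omega) (hb'.symm.trans hb0spec)
          have hsmallo : ∀ o', 0 < o' → o' < μ0 + j1 →
              (∀ t, t + o' ≤ c0 → q[t]? = q[t + o']?) → False := by
            intro o' ho'pos ho'lt hshift
            have h0 : q[0]? = q[o']? := by
              have := hshift 0 (by omega)
              rwa [Nat.zero_add] at this
            have hores : q[0]? = q[o' % j1]? := h0.trans (hmod0 o' ho'lt)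
            have ho2m : o' % j1 = 0 := by
              by_contra hnz
              exact hpres 0 (o' % j1) (Nat.pos_of_ne_zero hnz) (Nat.mod_lt _ hj1pos) hores
            have ho2d : j1 ≤ o' := by
              rcases Nat.lt_or_ge o' j1 with hh | hh
              · rw [Nat.mod_eq_of_lt hh] at ho2m; omega
              · exact hh
            have hstep : q[μ0 + j1 - o']? = q[μ0 + j1]? := by
              have := hshift (μ0 + j1 - o') (by omega)
              rwa [show μ0 + j1 - o' + o' = μ0 + j1 by omega] at this
            obtain ⟨k, hk⟩ := Nat.dvd_of_mod_eq_zero ho2m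
            rcases k with _ | k'
            · omega
            · rw [Nat.mul_succ] at hk
              have hres2 : (μ0 + j1 - o') % j1 = μ0 % j1 := by
                conv_rhs => rw [show μ0 = (μ0 + j1 - o') + j1 * k' by omega]
                rw [Nat.add_mul_mod_self_left]
              have hchain : q[μ0 + j1]? = q[μ0]? := by
                rw [← hstep, hmod0 (μ0 + j1 - o') (by omega), hres2, ← hmod0 μ0 (by omega)]
              exact hviol hchain.symm
          obtain ⟨o2, ho2, g1, g2⟩ := pall hC3 hb0lt hc0n hb0spec
          have ho20 : o2 = 0 := by
            by_contra hne
            have ho2pos : 0 < o2 := Nat.pos_of_ne_zero hne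
            rcases Nat.lt_or_ge o2 (μ0 + j1) with hlt | hge
            · exact hsmallo o2 ho2pos hlt (fun t htc => g1 t (by omega))
            · have h0 : q[0]? = q[o2]? := by
                have := g1 0 (by omega)
                rwa [Nat.zero_add] at this
              exact hfresh 0 o2 (by omega) hge (by omega) h0
          have hlemA : ∀ s, b0 ≤ s → s + (c0 - b0) < n → q[s]? = q[s + (c0 - b0)]? := by
            intro s hs hsn
            rcases eq_or_lt_of_le hs with rfl | h
            · rw [show b0 + (c0 - b0) = c0 by omega]
              exact hb0spec
            · have := g2 s h (by rw [ho20, Nat.sub_zero]; omega)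
              rwa [ho20, Nat.sub_zero] at this
          rcases Nat.lt_or_ge b0 (μ0 + j1) with hb0μ | hb0μ
          · rcases le_or_gt n (c0 + (μ0 + j1 - b0)) with hshort | hlong
            · right; left
              exact build_b2b (d := j1) (μ := μ0 + j1) hj1pos (by omega) (by omega) hb0μ
                (by omega) (by omega) hshort hmod0 hlemA
                (fun x y h1 h2 h3 => hwind x y (by omega) h2 h3)
                hfresh
            · right; right
              have hb0d : b0 ≤ j1 := by
                by_contra hcon
                push_neg at hcon
                have hEq3 : q[b0 - j1]? = q[c0]? := by
                  have h6 : q[b0 - j1]? = q[b0]? := by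
                    have := hper (b0 - j1) (by omega)
                    rwa [show b0 - j1 + j1 = b0 by omega] at this
                  exact h6.trans hb0spec
                obtain ⟨o3, ho3, k1, k2⟩ := pall hC3 (show b0 - j1 < c0 by omega) hc0n hEq3
                rcases Nat.eq_zero_or_pos o3 with ho30 | ho3pos
                · have h7 := k2 μ0 (by omega) (by rw [ho30, Nat.sub_zero]; omega)
                  rw [ho30, Nat.sub_zero] at h7
                  have h8 := hlemA (μ0 + j1) (by omega) (by omega)
                  have h9 : μ0 + (c0 - (b0 - j1)) = μ0 + j1 + (c0 - b0) := by omega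
                  rw [h9] at h7
                  exact hviol (h7.trans h8.symm)
                · rcases Nat.lt_or_ge o3 (μ0 + j1) with hlt | hge
                  · exact hsmallo o3 ho3pos hlt (fun t htc => k1 t (by omega))
                  · have h0 : q[0]? = q[o3]? := by
                      have := k1 0 (by omega)
                      rwa [Nat.zero_add] at this
                    exact hfresh 0 o3 (by omega) hge (by omega) h0
              exact build_b3 (d := j1) (μ := μ0 + j1) hj1pos (by omega) (by omega) hb0μ
                hb0d (by omega) (by omega) hper hlemA
                (fun x y h1 h2 h3 => hwind x y (by omega) h2 h3)
                hfresh
          · left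
            exact build_two (d := j1) (μ := μ0 + j1) (m := b0) (D := c0 - b0) hj1pos
              (by omega) (by omega) hb0μ (by omega) hper hlemA
              (fun x y h1 h2 h3 => hwind x y (by omega) h2 h3)
              (fun x y h1 h2 h3 => hfresh x y h1 h2 (by omega))
        · left
          have hfresh2 : ∀ x y, x < y → μ0 + j1 ≤ y → y < n → q[x]? ≠ q[y]? := by
            intro x y h1 h2 h3 hEq'
            exact hPc ⟨y, ⟨h2, h3⟩, x, h1, hEq'⟩
          exact build_two (d := j1) (μ := μ0 + j1) (m := n - 1) (D := 1) hj1pos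
            (by omega) (by omega) (by omega) (by omega) hper
            (fun s hs hsn => by omega)
            (fun x y h1 h2 h3 => hwind x y (by omega) h2 h3)
            (fun x y h1 h2 h3 => hfresh2 x y h1 h2 (by omega))
      · left
        apply build_tail (a := 0) (p := j1) hj1pos (by omega)
        · intro s hs hsp
          by_contra hne
          exact hV ⟨s, hsp, hne⟩
        · intro x y hxy hy
          exact hpres x y hxy (by omega)
  · -- q has no repeated letter
    left
    refine ⟨0, 0, [], [], q, by
      simp only [List.nil_append]
      rw [List.nodup_iff_getElem?_ne_getElem?]
      intro i j hij hj hEq'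
      exact hex ⟨j, hj, i, hij, hEq'⟩, ?_⟩
    rw [show wpow ([] : List α) 0 = [] from rfl]
    simp only [List.nil_append, List.append_nil]
    exact List.infix_rfl

end Forward

theorem b2a_c3 {q : List α} (h : CondB2a q) : CondC3 q := by
  obtain ⟨j, k, u, v, w, hnd, hinf⟩ := h
  exact c3_of_shift _ (shiftB2a u v w hnd j k) q hinf

theorem b2b_c3 {q : List α} (h : CondB2b q) : CondC3 q := by
  obtain ⟨k, u, v, w, hnd, hinf⟩ := h
  exact c3_of_shift _ (shiftB2b u v w hnd k) q hinf

theorem b3_c3 {q : List α} (h : CondB3 q) : CondC3 q := by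
  obtain ⟨k, u, v, w, hnd, hinf⟩ := h
  exact c3_of_shift _ (shiftB3 u v w hnd k) q hinf

end Stmt8

theorem stmt_8 {α : Type*} (q : List α) :
    (CondC3 q → CondB2a q ∨ CondB2b q ∨ CondB3 q) ∧
    (CondB2a q → CondC3 q) ∧ (CondB2b q → CondC3 q) ∧ (CondB3 q → CondC3 q) := by
  exact ⟨fun h => Stmt8.c3_forward h, fun h => Stmt8.b2a_c3 h,
    fun h => Stmt8.b2b_c3 h, fun h => Stmt8.b3_c3 h⟩
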